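/- The operators S₁ = -4i(I₁ₓI₂zI₃ᵧ + I₁ᵧI₂zI₃ₓ), S₂ = -2i(I₁ₓI₂ₓ + I₂ₓI₃ₓ), S₃ = -2i(I₁ᵧI₂ᵧ + I₂ᵧI₃ᵧ) on (ℂ²)⊗³ satisfy the so(3) relations [S₁,S₂] = S₃, [S₂,S₃] = S₁, [S₃,S₁] = S₂. -/
import Mathlib


open Matrix Kronecker

noncomputable section

def Ix : Matrix (Fin 2) (Fin 2) ℂ := (1 / 2 : ℂ) • !![0, 1; 1, 0]
def Iy : Matrix (Fin 2) (Fin 2) ℂ := (1 / 2 : ℂ) • !![0, -Complex.I; Complex.I, 0]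
def Iz : Matrix (Fin 2) (Fin 2) ℂ := (1 / 2 : ℂ) • !![1, 0; 0, -1]
def Id2 : Matrix (Fin 2) (Fin 2) ℂ := 1

def S1 : Matrix ((Fin 2 × Fin 2) × Fin 2) ((Fin 2 × Fin 2) × Fin 2) ℂ :=
  (-4 * Complex.I) • ((Ix ⊗ₖ Iz) ⊗ₖ Iy + (Iy ⊗ₖ Iz) ⊗ₖ Ix)
def S2 : Matrix ((Fin 2 × Fin 2) × Fin 2) ((Fin 2 × Fin 2) × Fin 2) ℂ :=
  (-2 * Complex.I) • ((Ix ⊗ₖ Ix) ⊗ₖ Id2 + (Id2 ⊗ₖ Ix) ⊗ₖ Ix)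
def S3 : Matrix ((Fin 2 × Fin 2) × Fin 2) ((Fin 2 × Fin 2) × Fin 2) ℂ :=
  (-2 * Complex.I) • ((Iy ⊗ₖ Iy) ⊗ₖ Id2 + (Id2 ⊗ₖ Iy) ⊗ₖ Iy)

lemma hxx : Ix * Ix = ((1:ℂ)/4) • (1 : Matrix (Fin 2) (Fin 2) ℂ) := by
  ext i j; fin_cases i <;> fin_cases j <;>
    simp [Ix, Matrix.mul_apply, Fin.sum_univ_two, Matrix.one_apply] <;> ring
lemma hyy : Iy * Iy = ((1:ℂ)/4) • (1 : Matrix (Fin 2) (Fin 2) ℂ) := by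
  ext i j; fin_cases i <;> fin_cases j <;>
    simp [Iy, Matrix.mul_apply, Fin.sum_univ_two, Matrix.one_apply, Complex.ext_iff] <;> ring
lemma hxy : Ix * Iy = (Complex.I/2) • Iz := by
  ext i j; fin_cases i <;> fin_cases j <;>
    simp [Ix, Iy, Iz, Matrix.mul_apply, Fin.sum_univ_two, Complex.ext_iff] <;> ring
lemma hyx : Iy * Ix = (-(Complex.I)/2) • Iz := by
  ext i j; fin_cases i <;> fin_cases j <;>
    simp [Ix, Iy, Iz, Matrix.mul_apply, Fin.sum_univ_two, Complex.ext_iff] <;> ring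
lemma hxz : Ix * Iz = (-(Complex.I)/2) • Iy := by
  ext i j; fin_cases i <;> fin_cases j <;>
    simp [Ix, Iy, Iz, Matrix.mul_apply, Fin.sum_univ_two, Complex.ext_iff] <;> ring
lemma hzx : Iz * Ix = (Complex.I/2) • Iy := by
  ext i j; fin_cases i <;> fin_cases j <;>
    simp [Ix, Iy, Iz, Matrix.mul_apply, Fin.sum_univ_two, Complex.ext_iff] <;> ring
lemma hyz : Iy * Iz = (Complex.I/2) • Ix := by
  ext i j; fin_cases i <;> fin_cases j <;>
    simp [Ix, Iy, Iz, Matrix.mul_apply, Fin.sum_univ_two, Complex.ext_iff] <;> ring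
lemma hzy : Iz * Iy = (-(Complex.I)/2) • Ix := by
  ext i j; fin_cases i <;> fin_cases j <;>
    simp [Ix, Iy, Iz, Matrix.mul_apply, Fin.sum_univ_two, Complex.ext_iff] <;> ring

theorem stmt_14 :
    S1 * S2 - S2 * S1 = S3 ∧ S2 * S3 - S3 * S2 = S1 ∧ S3 * S1 - S1 * S3 = S2 := by
  refine ⟨?_, ?_, ?_⟩ <;>
  · simp only [S1, S2, S3, Id2, smul_mul_assoc, mul_smul_comm, add_mul, mul_add,
      ← Matrix.mul_kronecker_mul, hxx, hyy, hxy, hyx, hxz, hzx, hyz, hzy,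
      one_mul, mul_one, Matrix.smul_kronecker, Matrix.kronecker_smul, smul_smul, smul_add]
    match_scalars <;> norm_num [Complex.ext_iff]
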